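/- arXiv:2102.00936 — 2 statements merged into one kernel-verified Lean document; each statement's English description precedes it below -/
import Mathlib

section
/- (Passi–Joukhovitski) Let M be a commutative monoid with group completion i: M → M⁺, and let A be an abelian group. Then restriction along i gives a bijection between polynomial maps M⁺ → A of degree ≤ n and polynomial maps M → A of degree ≤ n. -/
/-- `PolyDeg n f` means that `f` is polynomial of degree `≤ n - 1`;
`PolyDeg 0 f` means `f` is identically zero (degree `≤ -1`),
and `PolyDeg (n+1) f` means `f` is polynomial of degree `≤ n`. -/
def PolyDeg {M A : Type*} [AddCommMonoid M] [AddCommGroup A] : ℕ → (M → A) → Prop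
  | 0, f => ∀ x, f x = 0
  | n + 1, f => ∀ y : M, PolyDeg n fun x => f (x + y) - f x

/-- `i : M →+ G` is a group completion of the commutative monoid `M` if every homomorphism
from `M` to an abelian group factors uniquely through `i`. -/
def IsGroupCompletion {M G : Type} [AddCommMonoid M] [AddCommGroup G] (i : M →+ G) : Prop :=
  ∀ (H : Type) [AddCommGroup H] (φ : M →+ H), ∃! ψ : G →+ H, ψ.comp i = φ

open Finset AddMonoidAlgebra



namespace PJ

variable {N A : Type*} [AddCommMonoid N] [AddCommGroup A]

/-- The difference operator. -/
def dd (y : N) (f : N → A) : N → A := fun x => f (x + y) - f x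

theorem polyDeg_succ_iff {m : ℕ} {f : N → A} : PolyDeg (m + 1) f ↔ ∀ y, PolyDeg m (dd y f) :=
  Iff.rfl

theorem polyDeg_congr {m : ℕ} {f g : N → A} (h : ∀ x, f x = g x) (hf : PolyDeg m f) :
    PolyDeg m g := by
  have : f = g := funext h
  exact this ▸ hf

theorem polyDeg_zero (m : ℕ) : PolyDeg m (0 : N → A) := by
  induction m with
  | zero => intro x; rfl
  | succ m ih => intro y; exact polyDeg_congr (fun x => by simp [Pi.zero_apply]) ih

theorem polyDeg_add {m : ℕ} {f g : N → A} (hf : PolyDeg m f) (hg : PolyDeg m g) :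
    PolyDeg m (f + g) := by
  induction m generalizing f g with
  | zero => intro x; simp [Pi.add_apply, hf x, hg x]
  | succ m ih =>
    intro y
    refine polyDeg_congr (f := dd y f + dd y g) (fun x => by simp [dd, Pi.add_apply]; abel) ?_
    exact ih (hf y) (hg y)

theorem polyDeg_zsmul {m : ℕ} {f : N → A} (c : ℤ) (hf : PolyDeg m f) :
    PolyDeg m (c • f) := by
  induction m generalizing f with
  | zero => intro x; simp [Pi.smul_apply, hf x]
  | succ m ih =>
    intro y
    refine polyDeg_congr (f := c • dd y f) (fun x => by simp [dd, Pi.smul_apply, smul_sub]) ?_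
    exact ih (hf y)

theorem polyDeg_translate {m : ℕ} {f : N → A} (c : N) (hf : PolyDeg m f) :
    PolyDeg m (fun x => f (x + c)) := by
  induction m generalizing f with
  | zero => intro x; exact hf _
  | succ m ih =>
    intro y
    refine polyDeg_congr (f := fun x => (dd y f) (x + c)) (fun x => by simp [dd, add_right_comm]) ?_
    exact ih (hf y)

theorem polyDeg_comp {M' : Type*} [AddCommMonoid M'] {m : ℕ} {f : N → A} (j : M' →+ N)
    (hf : PolyDeg m f) : PolyDeg m (f ∘ j) := by
  induction m generalizing f with
  | zero => intro x; exact hf _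
  | succ m ih =>
    intro y
    refine polyDeg_congr (f := (dd (j y) f) ∘ j) (fun x => by simp [dd, Function.comp]) ?_
    exact ih (hf (j y))

end PJ

namespace PJ2
variable (N A : Type*) [AddCommMonoid N] [AddCommGroup A]

/-- translation as a monoid hom into endomorphisms -/
def shiftHom : Multiplicative N →* AddMonoid.End (N → A) where
  toFun y := { toFun := fun f x => f (x + y.toAdd),
               map_zero' := rfl,
               map_add' := fun f g => rfl }
  map_one' := AddMonoidHom.ext fun f => funext fun x => by
    show f (x + (1 : Multiplicative N).toAdd) = f x; simp
  map_mul' y z := AddMonoidHom.ext fun f => funext fun x => by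
    show f (x + (y.toAdd + z.toAdd)) = f (x + y.toAdd + z.toAdd)
    rw [add_assoc]

noncomputable def Phi : AddMonoidAlgebra ℤ N →ₐ[ℤ] AddMonoid.End (N → A) :=
  AddMonoidAlgebra.lift ℤ _ N (shiftHom N A)

variable {N A}

@[simp] theorem Phi_single (y : N) (c : ℤ) (f : N → A) (x : N) :
    Phi N A (single y c) f x = c • f (x + y) := by
  rw [Phi, AddMonoidAlgebra.lift_single]
  rfl

@[simp] theorem Phi_one (f : N → A) : Phi N A 1 f = f := by
  rw [map_one]; rfl

theorem Phi_mul (p q : AddMonoidAlgebra ℤ N) (f : N → A) :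
    Phi N A (p * q) f = Phi N A p (Phi N A q f) := by
  rw [map_mul]; rfl

end PJ2
namespace PJ3
open PJ PJ2
variable {N A : Type*} [AddCommMonoid N] [AddCommGroup A]

/-- `[y] - 1` in the monoid algebra. -/
noncomputable def P (y : N) : AddMonoidAlgebra ℤ N := single y 1 - 1

theorem Phi_P (y : N) (f : N → A) : Phi N A (P y) f = dd y f := by
  funext x
  have : Phi N A (P y) f = Phi N A (single y 1) f - Phi N A 1 f := by
    rw [P, map_sub]; rfl
  rw [this]
  show Phi N A (single y 1) f x - Phi N A 1 f x = dd y f x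
  rw [Phi_single, Phi_one, one_smul, dd]

/-- The augmentation ideal. -/
noncomputable def Iaug (N : Type*) [AddCommMonoid N] : Ideal (AddMonoidAlgebra ℤ N) :=
  Ideal.span (Set.range (P (N := N)))

/-- The annihilator ideal of `f`. -/
noncomputable def Zf (f : N → A) : Ideal (AddMonoidAlgebra ℤ N) where
  carrier := {p | Phi N A p f = 0}
  add_mem' := by
    intro p q hp hq
    show Phi N A (p + q) f = 0
    rw [map_add]
    show Phi N A p f + Phi N A q f = 0
    rw [hp, hq, add_zero]
  zero_mem' := by show Phi N A 0 f = 0; rw [map_zero]; rfl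
  smul_mem' := by
    intro c p hp
    show Phi N A (c * p) f = 0
    rw [Phi_mul, hp]
    exact map_zero _

theorem mem_Zf {f : N → A} {p : AddMonoidAlgebra ℤ N} : p ∈ Zf f ↔ Phi N A p f = 0 := Iff.rfl

theorem polyDeg_Phi {m : ℕ} (r : AddMonoidAlgebra ℤ N) {g : N → A} (hg : PolyDeg m g) :
    PolyDeg m (Phi N A r g) := by
  induction r using AddMonoidAlgebra.induction with
  | zero =>
    rw [map_zero]
    exact polyDeg_zero m
  | single_add y c r hy hc ih =>
    rw [map_add]
    show PolyDeg m (Phi N A (single y c) g + Phi N A r g)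
    refine polyDeg_add ?_ ih
    refine polyDeg_congr (f := c • fun x => g (x + y)) (fun x => ?_) ?_
    · rw [Phi_single]; rfl
    · exact polyDeg_zsmul c (polyDeg_translate y hg)

theorem polyDeg_span {m : ℕ} {s : AddMonoidAlgebra ℤ N} (hs : s ∈ Iaug N) {f : N → A}
    (hf : PolyDeg (m + 1) f) : PolyDeg m (Phi N A s f) := by
  induction hs using Submodule.span_induction with
  | mem p hp =>
    obtain ⟨y, rfl⟩ := hp
    rw [Phi_P]
    exact hf y
  | zero => rw [map_zero]; exact polyDeg_zero m
  | add p q _ _ hp hq =>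
    rw [map_add]
    exact polyDeg_add hp hq
  | smul c p _ hp =>
    rw [smul_eq_mul, Phi_mul]
    exact polyDeg_Phi c hp

theorem Iaug_pow_le_Zf {m : ℕ} {f : N → A} (hf : PolyDeg m f) : Iaug N ^ m ≤ Zf f := by
  induction m generalizing f with
  | zero =>
    rw [pow_zero, Ideal.one_eq_top]
    intro p _
    rw [mem_Zf]
    have : f = 0 := funext hf
    rw [this]
    exact map_zero _
  | succ m ih =>
    rw [pow_succ, Ideal.mul_le]
    intro r hr s hs
    rw [mem_Zf, Phi_mul]
    exact ih (polyDeg_span hs hf) hr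

/-- `PolyDeg` from vanishing of all iterated differences. -/
theorem polyDeg_of_foldr {m : ℕ} {f : N → A}
    (H : ∀ l : List N, l.length = m → ∀ x, (l.foldr dd f) x = 0) : PolyDeg m f := by
  induction m generalizing f with
  | zero => exact H [] rfl
  | succ m ih =>
    intro y
    refine polyDeg_congr (f := dd y f) (fun x => rfl) (ih fun l hl x => ?_)
    have := H (l ++ [y]) (by simp [hl])
    rw [List.foldr_append] at this
    exact this x

theorem foldr_eq_Phi (l : List N) (f : N → A) :
    l.foldr dd f = Phi N A (l.map P).prod f := by
  induction l with
  | nil => simp only [List.foldr_nil, List.map_nil, List.prod_nil, Phi_one]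
  | cons y l ih => rw [List.foldr_cons, List.map_cons, List.prod_cons, Phi_mul, ih, Phi_P]

end PJ3
namespace PJ4

/-- truncated inverse of `u`: `u * newt m u = 1 - (1-u)^(m+1)` -/
noncomputable def newt {S : Type*} [CommRing S] (m : ℕ) (u : S) : S :=
  ∑ k ∈ range (m + 1), (((-1) ^ k * ((m + 1).choose (k + 1)) : ℤ)) • u ^ k

theorem newton_id {S : Type*} [CommRing S] (m : ℕ) (u : S) :
    u * newt m u = 1 - (1 - u) ^ (m + 1) := by
  have hexp : (1 - u) ^ (m + 1) = ∑ j ∈ range (m + 2), (-u) ^ j * 1 ^ (m + 1 - j) * ((m+1).choose j) := by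
    rw [sub_eq_add_neg, add_comm]
    exact Commute.add_pow (Commute.all _ _) (m + 1)
  rw [hexp, Finset.sum_range_succ']
  simp only [pow_zero, one_mul, Nat.choose_zero_right, Nat.cast_one, mul_one]
  rw [newt, Finset.mul_sum]
  have : ∀ k ∈ range (m+1),
      u * (((-1) ^ k * ((m + 1).choose (k + 1)) : ℤ) • u ^ k)
        = -((-u) ^ (k+1) * 1 ^ (m + 1 - (k+1)) * ((m+1).choose (k+1))) := by
    intro k _
    rw [zsmul_eq_mul]
    push_cast
    ring
  rw [Finset.sum_congr rfl this, Finset.sum_neg_distrib]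
  simp only [one_pow]
  abel

end PJ4

namespace PJ5
open PJ PJ2 PJ3 PJ4

theorem list_prod_mem_pow {S : Type*} [CommRing S] (J : Ideal S) :
    ∀ l : List S, (∀ x ∈ l, x ∈ J) → l.prod ∈ J ^ l.length
  | [], _ => by
    rw [List.prod_nil, List.length_nil, pow_zero, Ideal.one_eq_top]
    exact Submodule.mem_top
  | a :: l, h => by
    rw [List.prod_cons, List.length_cons, pow_succ']
    exact Ideal.mul_mem_mul (h a (List.mem_cons_self))
      (list_prod_mem_pow J l fun x hx => h x (List.mem_cons_of_mem a hx))

variable {M : Type} [AddCommMonoid M]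

noncomputable def Kd (M : Type) [AddCommMonoid M] (n : ℕ) : Ideal (AddMonoidAlgebra ℤ M) :=
  Iaug M ^ (n + 1)

noncomputable def pr (M : Type) [AddCommMonoid M] (n : ℕ) :
    AddMonoidAlgebra ℤ M →+* (AddMonoidAlgebra ℤ M ⧸ Kd M n) :=
  Ideal.Quotient.mk _

theorem sub_one_pow_mem (n : ℕ) (y : M) :
    ((1 : AddMonoidAlgebra ℤ M) - single y 1) ^ (n + 1) ∈ Kd M n := by
  rw [← neg_sub (single y 1) 1, neg_pow]
  have hP : (P y : AddMonoidAlgebra ℤ M) ^ (n + 1) ∈ Kd M n :=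
    Ideal.pow_mem_pow (Ideal.subset_span (Set.mem_range_self y)) (n + 1)
  exact Ideal.mul_mem_left _ _ hP

theorem pr_mul_newt (n : ℕ) (y : M) :
    pr M n (single y 1) * pr M n (newt n (single y 1)) = 1 := by
  rw [← map_mul, newton_id, map_sub, map_one]
  have : pr M n ((1 - single y 1 : AddMonoidAlgebra ℤ M) ^ (n + 1)) = 0 :=
    Ideal.Quotient.eq_zero_iff_mem.mpr (sub_one_pow_mem n y)
  rw [this, sub_zero]

noncomputable def uu (n : ℕ) (m : M) : (AddMonoidAlgebra ℤ M ⧸ Kd M n)ˣ where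
  val := pr M n (single m 1)
  inv := pr M n (newt n (single m 1))
  val_inv := pr_mul_newt n m
  inv_val := by rw [mul_comm]; exact pr_mul_newt n m

noncomputable def Isp (M : Type) [AddCommMonoid M] (n : ℕ) :
    Ideal (AddMonoidAlgebra ℤ M ⧸ Kd M n) := (Iaug M).map (pr M n)

noncomputable def Uu (M : Type) [AddCommMonoid M] (n : ℕ) :
    Subgroup (AddMonoidAlgebra ℤ M ⧸ Kd M n)ˣ where
  carrier := {u | ((u : AddMonoidAlgebra ℤ M ⧸ Kd M n) - 1) ∈ Isp M n}
  mul_mem' := by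
    intro u v hu hv
    have : ((u * v : _ˣ) : AddMonoidAlgebra ℤ M ⧸ Kd M n) - 1
        = (u : AddMonoidAlgebra ℤ M ⧸ Kd M n) * ((v : AddMonoidAlgebra ℤ M ⧸ Kd M n) - 1)
          + ((u : AddMonoidAlgebra ℤ M ⧸ Kd M n) - 1) := by
      rw [Units.val_mul]; ring
    rw [Set.mem_setOf_eq, this]
    exact Ideal.add_mem _ (Ideal.mul_mem_left _ _ hv) hu
  one_mem' := by
    rw [Set.mem_setOf_eq, Units.val_one, sub_self]
    exact Ideal.zero_mem _
  inv_mem' := by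
    intro u hu
    have huu : ((u⁻¹ : _ˣ) : AddMonoidAlgebra ℤ M ⧸ Kd M n) * u = 1 := by
      rw [← Units.val_mul, inv_mul_cancel, Units.val_one]
    have : ((u⁻¹ : _ˣ) : AddMonoidAlgebra ℤ M ⧸ Kd M n) - 1
        = -(((u⁻¹ : _ˣ) : AddMonoidAlgebra ℤ M ⧸ Kd M n)
            * ((u : AddMonoidAlgebra ℤ M ⧸ Kd M n) - 1)) := by
      rw [mul_sub, huu, mul_one]; ring
    rw [Set.mem_setOf_eq, this]
    exact neg_mem (Ideal.mul_mem_left _ _ hu)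

theorem uu_mem_Uu (n : ℕ) (m : M) : uu n m ∈ Uu M n := by
  show (pr M n (single m 1) - 1) ∈ Isp M n
  have : pr M n (single m 1) - 1 = pr M n (P m) := by rw [P, map_sub, map_one]
  rw [this]
  exact Ideal.mem_map_of_mem _ (Ideal.subset_span ⟨m, rfl⟩)

noncomputable def mu (M : Type) [AddCommMonoid M] (n : ℕ) : M →+ Additive ↥(Uu M n) :=
  AddMonoidHom.mk' (fun m => Additive.ofMul (⟨uu n m, uu_mem_Uu n m⟩ : ↥(Uu M n)))
    (by
      intro a b
      rw [← ofMul_mul]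
      refine congrArg Additive.ofMul (Subtype.ext (Units.ext ?_))
      show pr M n (single (a + b) 1) = pr M n (single a 1) * pr M n (single b 1)
      rw [← map_mul, AddMonoidAlgebra.single_mul_single, one_mul])

noncomputable def Fb {A : Type} [AddCommGroup A] (n : ℕ) (f : M → A)
    (s : AddMonoidAlgebra ℤ M ⧸ Kd M n) : A :=
  Phi M A (Quotient.out s) f 0

variable {A : Type} [AddCommGroup A] {n : ℕ} {f : M → A}

theorem Fb_mk (hf : PolyDeg (n + 1) f) (p : AddMonoidAlgebra ℤ M) :
    Fb n f (pr M n p) = Phi M A p f 0 := by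
  have h1 : Ideal.Quotient.mk (Kd M n) (Quotient.out (pr M n p)) = pr M n p :=
    Quotient.out_eq _
  have h2 : Quotient.out (pr M n p) - p ∈ Kd M n := Ideal.Quotient.eq.mp h1
  have h3 : Phi M A (Quotient.out (pr M n p) - p) f = 0 := Iaug_pow_le_Zf hf h2
  have h4 : Phi M A (Quotient.out (pr M n p)) f - Phi M A p f = 0 := by
    rw [← h3, map_sub]; rfl
  have h5 := congrFun (sub_eq_zero.mp h4) 0
  exact h5

theorem Fb_sub (hf : PolyDeg (n + 1) f) (s t : AddMonoidAlgebra ℤ M ⧸ Kd M n) :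
    Fb n f (s - t) = Fb n f s - Fb n f t := by
  obtain ⟨p, rfl⟩ := Ideal.Quotient.mk_surjective s
  obtain ⟨q, rfl⟩ := Ideal.Quotient.mk_surjective t
  show Fb n f (pr M n p - pr M n q) = Fb n f (pr M n p) - Fb n f (pr M n q)
  rw [← map_sub, Fb_mk hf, Fb_mk hf, Fb_mk hf, map_sub]
  rfl

theorem Fb_zero (hf : PolyDeg (n + 1) f) : Fb n f 0 = 0 := by
  have : (0 : AddMonoidAlgebra ℤ M ⧸ Kd M n) = pr M n 0 := (map_zero _).symm
  rw [this, Fb_mk hf, map_zero]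
  rfl

end PJ5

namespace PJ6
open PJ PJ2 PJ3 PJ4 PJ5

variable {N A : Type*} [AddCommMonoid N] [AddCommGroup A]

theorem Phi_sub_app (p q : AddMonoidAlgebra ℤ N) (f : N → A) :
    Phi N A (p - q) f = Phi N A p f - Phi N A q f := by
  rw [map_sub]; rfl

theorem Phi_sum_apply {ι : Type*} (s : Finset ι) (p : ι → AddMonoidAlgebra ℤ N) (f : N → A)
    (x : N) : Phi N A (∑ j ∈ s, p j) f x = ∑ j ∈ s, Phi N A (p j) f x := by
  induction s using Finset.cons_induction with
  | empty => rw [Finset.sum_empty, Finset.sum_empty, map_zero]; rfl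
  | cons j s hj ih =>
    rw [Finset.sum_cons, Finset.sum_cons, map_add, ← ih]
    rfl

end PJ6

namespace PJ6
open PJ PJ2 PJ3 PJ4 PJ5

theorem rep_formula {M G A : Type} [AddCommMonoid M] [AddCommGroup G] [AddCommGroup A]
    (i : M →+ G) (n : ℕ) (f : M → A) (h : G → A) (hh : PolyDeg (n + 1) h) (hhi : h ∘ i = f)
    (a b : M) (g : G) (hg : i a - i b = g) :
    h g = ∑ k ∈ Finset.range (n + 1),
      (((-1) ^ k * ((n + 1).choose (k + 1)) : ℤ)) • f (a + k • b) := by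
  set u : AddMonoidAlgebra ℤ G := single (i b) 1 with hu
  have h1 : Phi G A ((u - 1) ^ (n + 1)) h = 0 := by
    apply Iaug_pow_le_Zf hh
    have hP : u - 1 = P (i b) := rfl
    rw [hP]
    exact Ideal.pow_mem_pow (Ideal.subset_span (Set.mem_range_self _)) (n + 1)
  have h2 : Phi G A (u * newt n u) h = h := by
    have e1 : u * newt n u = 1 - ((-1 : AddMonoidAlgebra ℤ G)) ^ (n + 1) * (u - 1) ^ (n + 1) := by
      rw [newton_id, ← neg_sub u 1, neg_pow]
    rw [e1, Phi_sub_app, Phi_one, Phi_mul, h1, map_zero, sub_zero]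
  have h3 : u * newt n u = ∑ k ∈ Finset.range (n + 1),
      single ((k + 1) • (i b)) (((-1) ^ k * ((n + 1).choose (k + 1)) : ℤ)) := by
    rw [newt, Finset.mul_sum]
    refine Finset.sum_congr rfl fun k _ => ?_
    rw [mul_smul_comm, ← pow_succ' u k, hu, AddMonoidAlgebra.single_pow, one_pow,
      AddMonoidAlgebra.smul_single, smul_eq_mul, mul_one]
  have h4 : h g = ∑ k ∈ Finset.range (n + 1),
      (((-1) ^ k * ((n + 1).choose (k + 1)) : ℤ)) • h (g + (k + 1) • i b) := by
    conv_lhs => rw [← h2, h3]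
    rw [Phi_sum_apply]
    refine Finset.sum_congr rfl fun k _ => ?_
    rw [Phi_single]
  rw [h4]
  refine Finset.sum_congr rfl fun k _ => ?_
  have h5 : g + (k + 1) • i b = i (a + k • b) := by
    rw [← hg, map_add, map_nsmul, succ_nsmul]
    abel
  rw [h5, ← hhi]
  rfl

theorem exists_rep {M G : Type} [AddCommMonoid M] [AddCommGroup G] (i : M →+ G)
    (hi : IsGroupCompletion i) (g : G) : ∃ a b, i a - i b = g := by
  set H : AddSubgroup G :=
    { carrier := {g | ∃ a b, i a - i b = g}
      zero_mem' := ⟨0, 0, by simp⟩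
      add_mem' := by
        rintro x y ⟨a, b, rfl⟩ ⟨c, d, rfl⟩
        exact ⟨a + c, b + d, by rw [map_add, map_add]; abel⟩
      neg_mem' := by
        rintro x ⟨a, b, rfl⟩
        exact ⟨b, a, by abel⟩ } with hH
  let φ : M →+ ↥H := AddMonoidHom.mk' (fun m => ⟨i m, m, 0, by simp⟩)
    (fun a b => Subtype.ext (by simp [map_add]))
  obtain ⟨ψ, hψ, -⟩ := hi ↥H φ
  obtain ⟨ψ', hψ'1, hψ'u⟩ := hi G i
  have e1 : (H.subtype.comp ψ).comp i = i := by
    rw [AddMonoidHom.comp_assoc, hψ]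
    ext m
    rfl
  have e3 : H.subtype.comp ψ = AddMonoidHom.id G :=
    (hψ'u _ e1).trans (hψ'u (AddMonoidHom.id G) (by ext m; simp)).symm
  have hg : ((ψ g : ↥H) : G) = g := DFunLike.congr_fun e3 g
  obtain ⟨a, b, hab⟩ := (ψ g).2
  exact ⟨a, b, hab.trans hg⟩

end PJ6


open PJ PJ2 PJ3 PJ4 PJ5 PJ6 in
/-- (Passi–Joukhovitski) Restriction along the group completion `i : M → M⁺` gives a bijection
between polynomial maps `M⁺ → A` of degree `≤ n` and polynomial maps `M → A` of degree `≤ n`: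
the restriction of a polynomial map is polynomial, and every polynomial map on `M` extends
uniquely to a polynomial map on `M⁺`. -/
theorem polyDeg_group_completion_bijection {M G A : Type} [AddCommMonoid M] [AddCommGroup G]
    [AddCommGroup A] (i : M →+ G) (hi : IsGroupCompletion i) (n : ℕ) :
    (∀ h : G → A, PolyDeg (n + 1) h → PolyDeg (n + 1) (h ∘ i)) ∧
    (∀ f : M → A, PolyDeg (n + 1) f →
      ∃! h : G → A, PolyDeg (n + 1) h ∧ h ∘ i = f) := by
  refine ⟨fun h hh => polyDeg_comp i hh, fun f hf => ?_⟩
  obtain ⟨ψ, hψ, -⟩ := hi (Additive ↥(Uu M n)) (mu M n)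
  set V : G → (AddMonoidAlgebra ℤ M ⧸ Kd M n) := fun g =>
    (((Additive.toMul (ψ g) : ↥(Uu M n)) : (AddMonoidAlgebra ℤ M ⧸ Kd M n)ˣ) :
      AddMonoidAlgebra ℤ M ⧸ Kd M n) with hV
  have hVadd : ∀ x y : G, V (x + y) = V x * V y := by
    intro x y
    rw [hV]
    simp only [map_add]
    rfl
  have hVi : ∀ m : M, V (i m) = pr M n (single m 1) := by
    intro m
    have hm : ψ (i m) = mu M n m := DFunLike.congr_fun hψ m
    simp only [hV, hm]
    rfl
  have hVmem : ∀ g : G, V g - 1 ∈ Isp M n := fun g => (Additive.toMul (ψ g)).2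
  set h : G → A := fun g => Fb n f (V g) with hh
  have hcomp : h ∘ i = f := by
    funext m
    show Fb n f (V (i m)) = f m
    rw [hVi, Fb_mk hf, Phi_single, one_smul, zero_add]
  have hkey : ∀ l : List G, ∀ x : G,
      (l.foldr dd h) x = Fb n f (V x * (l.map fun y => V y - 1).prod) := by
    intro l
    induction l with
    | nil =>
      intro x
      simp only [List.foldr_nil, List.map_nil, List.prod_nil, mul_one]
      rfl
    | cons y l ih =>
      intro x
      show (l.foldr dd h) (x + y) - (l.foldr dd h) x = _
      rw [ih, ih, ← Fb_sub hf]
      congr 1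
      rw [hVadd, List.map_cons, List.prod_cons]
      ring
  have hdeg : PolyDeg (n + 1) h := by
    apply polyDeg_of_foldr
    intro l hl x
    rw [hkey]
    have hmem : (l.map fun y => V y - 1).prod ∈ Isp M n ^ (n + 1) := by
      have hp := list_prod_mem_pow (Isp M n) (l.map fun y => V y - 1) (by
        intro z hz
        obtain ⟨y, -, rfl⟩ := List.mem_map.mp hz
        exact hVmem y)
      rwa [List.length_map, hl] at hp
    have hzero : Isp M n ^ (n + 1) = ⊥ := by
      show ((Iaug M).map (pr M n)) ^ (n + 1) = ⊥
      rw [← Ideal.map_pow]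
      exact Ideal.map_quotient_self _
    rw [hzero] at hmem
    rw [Ideal.mem_bot.mp hmem, mul_zero, Fb_zero hf]
  refine ⟨h, ⟨hdeg, hcomp⟩, ?_⟩
  rintro h' ⟨hd', hc'⟩
  funext g
  obtain ⟨a, b, hab⟩ := exists_rep i hi g
  rw [rep_formula i n f h' hd' hc' a b g hab, rep_formula i n f h hdeg hcomp a b g hab]
end

section
/- Let M be a commutative monoid, A an abelian group, and f: M → A a polynomial map. Let N ⊆ M × M be a submonoid containing the diagonal such that f(m₁) = f(m₂) for all (m₁, m₂) ∈ N. Then the unique polynomial extension f⁺: M⁺ → A to the group completion factors through the quotient of M⁺ by the subgroup generated by the elements m₁ - m₂ for (m₁, m₂) ∈ N. -/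
theorem PolyDeg.congr' {M A : Type*} [AddCommMonoid M] [AddCommGroup A] {n : ℕ} {f g : M → A}
    (hf : PolyDeg n f) (h : ∀ x, f x = g x) : PolyDeg n g := by
  induction n generalizing f g with
  | zero => intro x; rw [← h]; exact hf x
  | succ n ih => intro y; exact ih (hf y) (fun x => by rw [h, h])

theorem PolyDeg.sub' {M A : Type*} [AddCommMonoid M] [AddCommGroup A] {n : ℕ} {f g : M → A}
    (hf : PolyDeg n f) (hg : PolyDeg n g) : PolyDeg n (fun x => f x - g x) := by
  induction n generalizing f g with
  | zero => intro x; show f x - g x = 0; rw [hf x, hg x, sub_zero]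
  | succ n ih => intro y; exact ((ih (hf y) (hg y)).congr' (fun x => by beta_reduce; abel))

theorem PolyDeg.translate {M A : Type*} [AddCommMonoid M] [AddCommGroup A] {n : ℕ} {f : M → A}
    (hf : PolyDeg n f) (c : M) : PolyDeg n (fun x => f (x + c)) := by
  induction n generalizing f with
  | zero => intro x; exact hf _
  | succ n ih => intro y; exact (ih (hf y)).congr' (fun x => by rw [add_right_comm])

theorem vanish_of_vanish_on_range {M G A : Type} [AddCommMonoid M] [AddCommGroup G]
    [AddCommGroup A] (i : M →+ G) (hgen : AddSubgroup.closure (Set.range i) = ⊤)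
    (n : ℕ) (h : G → A) (hh : PolyDeg n h) (hz : ∀ m, h (i m) = 0) : ∀ x, h x = 0 := by
  induction n generalizing h with
  | zero => exact hh
  | succ n ih =>
    have key : ∀ m : M, ∀ x : G, h (x + i m) = h x := by
      intro m x
      have := ih _ (hh (i m)) (fun m' => by
        show h (i m' + i m) - h (i m') = 0
        rw [← i.map_add, hz, hz, sub_zero]) x
      exact sub_eq_zero.mp this
    let S : AddSubgroup G :=
      { carrier := {y | ∀ x, h (x + y) = h x}
        zero_mem' := fun x => by rw [add_zero]
        add_mem' := fun {a b} ha hb x => by rw [← add_assoc, hb, ha]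
        neg_mem' := fun {a} ha x => by
          have := ha (x + -a)
          rw [add_assoc, neg_add_cancel, add_zero] at this
          exact this.symm }
    have hle : AddSubgroup.closure (Set.range i) ≤ S := by
      rw [AddSubgroup.closure_le]
      rintro y ⟨m, rfl⟩
      exact key m
    rw [hgen] at hle
    intro x
    have h0 : h x = h 0 := by
      have := hle (AddSubgroup.mem_top x) 0
      rwa [zero_add] at this
    rw [h0, ← i.map_zero, hz]

theorem range_gen_of_completion {M G : Type} [AddCommMonoid M] [AddCommGroup G]
    (i : M →+ G) (hi : IsGroupCompletion i) :
    AddSubgroup.closure (Set.range i) = ⊤ := by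
  set K := AddSubgroup.closure (Set.range i) with hK
  have hmem : ∀ m : M, i m ∈ K := fun m =>
    AddSubgroup.subset_closure ⟨m, rfl⟩
  obtain ⟨ψ, hψ, huniq⟩ := hi (G ⧸ K) ((QuotientAddGroup.mk' K).comp i)
  have e1 := huniq (QuotientAddGroup.mk' K) rfl
  have e2 := huniq 0 (by
    ext m
    simp only [AddMonoidHom.comp_apply, AddMonoidHom.zero_apply, QuotientAddGroup.mk'_apply]
    exact ((QuotientAddGroup.eq_zero_iff _).mpr (hmem m)).symm)
  rw [eq_top_iff]
  intro x _
  have h0 : QuotientAddGroup.mk' K = (0 : G →+ G ⧸ K) := e1.trans e2.symm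
  have : (QuotientAddGroup.mk' K) x = 0 := by rw [h0]; rfl
  exact (QuotientAddGroup.eq_zero_iff _).mp this

/-- Let `f : M → A` be a polynomial map of degree `≤ n` and `N ⊆ M × M` a submonoid containing
the diagonal with `f m₁ = f m₂` for all `(m₁, m₂) ∈ N`. Then the (unique) polynomial extension
`f⁺ : M⁺ → A` to the group completion factors through the quotient of `M⁺` by the subgroup
generated by the elements `m₁ - m₂` for `(m₁, m₂) ∈ N`. -/
theorem polyDeg_extension_factors {M G A : Type} [AddCommMonoid M] [AddCommGroup G]
    [AddCommGroup A] (i : M →+ G) (hi : IsGroupCompletion i) (n : ℕ)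
    (f : M → A) (hf : PolyDeg (n + 1) f)
    (fplus : G → A) (hfplus : PolyDeg (n + 1) fplus) (hext : ∀ m : M, fplus (i m) = f m)
    (N : AddSubmonoid (M × M)) (hdiag : ∀ m : M, (m, m) ∈ N)
    (hN : ∀ q ∈ N, f q.1 = f q.2) :
    ∃ g : G ⧸ AddSubgroup.closure {z : G | ∃ q ∈ N, z = i q.1 - i q.2} → A,
      fplus = g ∘ (QuotientAddGroup.mk :
        G → G ⧸ AddSubgroup.closure {z : G | ∃ q ∈ N, z = i q.1 - i q.2}) := by
  have hgen := range_gen_of_completion i hi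
  set K := AddSubgroup.closure {z : G | ∃ q ∈ N, z = i q.1 - i q.2} with hKdef
  have gen_inv : ∀ q ∈ N, ∀ x : G, fplus (x + (i q.1 - i q.2)) = fplus x := by
    intro q hq x
    have hpoly : PolyDeg (n+1) (fun z => fplus (z + i q.1) - fplus (z + i q.2)) :=
      (hfplus.translate (i q.1)).sub' (hfplus.translate (i q.2))
    have hvan : ∀ m, (fun z => fplus (z + i q.1) - fplus (z + i q.2)) (i m) = 0 := by
      intro m
      show fplus (i m + i q.1) - fplus (i m + i q.2) = 0
      rw [← i.map_add, ← i.map_add, hext, hext]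
      exact sub_eq_zero.mpr (hN _ (N.add_mem (hdiag m) hq))
    have h0 := vanish_of_vanish_on_range i hgen (n+1) _ hpoly hvan (x - i q.2)
    beta_reduce at h0
    have e1 : x - i q.2 + i q.1 = x + (i q.1 - i q.2) := by abel
    have e2 : x - i q.2 + i q.2 = x := by abel
    rw [e1, e2] at h0
    exact sub_eq_zero.mp h0
  have Kinv : ∀ y ∈ K, ∀ x : G, fplus (x + y) = fplus x := by
    intro y hy
    let S : AddSubgroup G :=
      { carrier := {y | ∀ x, fplus (x + y) = fplus x}
        zero_mem' := fun x => by rw [add_zero]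
        add_mem' := fun {a b} ha hb x => by rw [← add_assoc, hb, ha]
        neg_mem' := fun {a} ha x => by
          have := ha (x + -a)
          rw [add_assoc, neg_add_cancel, add_zero] at this
          exact this.symm }
    have hle : K ≤ S := by
      rw [hKdef, AddSubgroup.closure_le]
      rintro z ⟨q, hq, rfl⟩
      exact gen_inv q hq
    exact hle hy
  refine ⟨Quotient.lift fplus (fun a b hab => ?_), funext fun x => rfl⟩
  have h1 : -a + b ∈ K := (QuotientAddGroup.leftRel_apply).mp hab
  have h2 := Kinv _ h1 a
  rw [add_neg_cancel_left] at h2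
  exact h2.symm
end
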